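/- Let |ψ⟩ = √r|00⟩ + √(1−r)|11⟩ be a two-qubit state with 0 ≤ r ≤ 1, let P⊥ = 𝟙 − |ψ⟩⟨ψ|, and let U_A, V_B range over unitaries acting only on the first and second qubit respectively. Then max over U_A, V_B of |⟨ψ| U_A† P⊥ V_B |ψ⟩| equals 2√(r(1−r)). -/

import Mathlib

open Matrix Kronecker

private lemma key_val (a b : ℝ) (hab : (b:ℂ)^2 = 1 - (a:ℂ)^2)
    (U V : Matrix (Fin 2) (Fin 2) ℂ) :
    star (fun p : Fin 2 × Fin 2 => if p = (0, 0) then (a : ℂ)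
                       else if p = (1, 1) then (b : ℂ) else 0) ⬝ᵥ
      (((U ⊗ₖ (1 : Matrix (Fin 2) (Fin 2) ℂ))ᴴ *
        (1 - Matrix.vecMulVec (fun p : Fin 2 × Fin 2 => if p = (0, 0) then (a : ℂ)
                       else if p = (1, 1) then (b : ℂ) else 0)
          (star (fun p : Fin 2 × Fin 2 => if p = (0, 0) then (a : ℂ)
                       else if p = (1, 1) then (b : ℂ) else 0))) *
        ((1 : Matrix (Fin 2) (Fin 2) ℂ) ⊗ₖ V)) *ᵥ
       (fun p : Fin 2 × Fin 2 => if p = (0, 0) then (a : ℂ)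
                       else if p = (1, 1) then (b : ℂ) else 0))
    = (a:ℂ)^2 * (b:ℂ)^2 * ((starRingEnd ℂ) (U 0 0) - (starRingEnd ℂ) (U 1 1)) * (V 0 0 - V 1 1)
      + (a:ℂ) * (b:ℂ) * ((starRingEnd ℂ) (U 1 0) * V 0 1 + (starRingEnd ℂ) (U 0 1) * V 1 0) := by
  simp [dotProduct, Matrix.mulVec, Matrix.mul_apply, Fintype.sum_prod_type,
    Fin.sum_univ_two, Matrix.vecMulVec_apply, Matrix.one_apply, Matrix.kroneckerMap_apply,
    Prod.ext_iff, Matrix.conjTranspose_apply]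
  ring_nf
  linear_combination (-((a:ℂ)^2 * (starRingEnd ℂ) (U 0 0) * V 0 0
    + (b:ℂ)^2 * (starRingEnd ℂ) (U 1 1) * V 1 1)) * hab

private lemma real_bound (a b c0 c1 d0 d1 e0 e1 g0 g1 : ℝ)
    (ha : 0 ≤ a) (hb : 0 ≤ b) (hc0 : 0 ≤ c0) (hc1 : 0 ≤ c1) (hd0 : 0 ≤ d0) (hd1 : 0 ≤ d1)
    (he0 : 0 ≤ e0) (he1 : 0 ≤ e1) (hg0 : 0 ≤ g0) (hg1 : 0 ≤ g1)
    (hab : a^2 + b^2 = 1)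
    (h1 : c0^2 + d0^2 = 1) (h2 : c0^2 + d1^2 = 1) (h3 : c1^2 + d1^2 = 1)
    (k1 : e0^2 + g0^2 = 1) (k2 : e0^2 + g1^2 = 1) (k3 : e1^2 + g1^2 = 1) :
    a^2*b^2*((c0+c1)*(e0+e1)) + a*b*(d1*g0 + d0*g1) ≤ 2*(a*b) := by
  have hcc : c1 = c0 := by
    have h : c1^2 = c0^2 := by linarith
    calc c1 = Real.sqrt (c1^2) := (Real.sqrt_sq hc1).symm
    _ = Real.sqrt (c0^2) := by rw [h]
    _ = c0 := Real.sqrt_sq hc0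
  have hdd : d1 = d0 := by
    have h : d1^2 = d0^2 := by linarith
    calc d1 = Real.sqrt (d1^2) := (Real.sqrt_sq hd1).symm
    _ = Real.sqrt (d0^2) := by rw [h]
    _ = d0 := Real.sqrt_sq hd0
  have hee : e1 = e0 := by
    have h : e1^2 = e0^2 := by linarith
    calc e1 = Real.sqrt (e1^2) := (Real.sqrt_sq he1).symm
    _ = Real.sqrt (e0^2) := by rw [h]
    _ = e0 := Real.sqrt_sq he0
  have hgg : g1 = g0 := by
    have h : g1^2 = g0^2 := by linarith
    calc g1 = Real.sqrt (g1^2) := (Real.sqrt_sq hg1).symm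
    _ = Real.sqrt (g0^2) := by rw [h]
    _ = g0 := Real.sqrt_sq hg0
  rw [hcc, hdd, hee, hgg]
  have hxy : c0*e0 + d0*g0 ≤ 1 := by
    nlinarith [sq_nonneg (c0*g0 - d0*e0), sq_nonneg (c0*e0 + d0*g0 + 1),
      mul_nonneg hc0 he0, mul_nonneg hd0 hg0]
  have hab2 : 2*(a*b) ≤ 1 := by nlinarith [sq_nonneg (a-b)]
  have habn : 0 ≤ a*b := mul_nonneg ha hb
  nlinarith [mul_nonneg habn (mul_nonneg hc0 he0), mul_nonneg habn (mul_nonneg hd0 hg0),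
    mul_nonneg (mul_nonneg habn habn) (mul_nonneg hc0 he0),
    mul_le_mul_of_nonneg_left hxy habn,
    mul_nonneg habn (sub_nonneg.mpr hab2)]

private lemma urow (U : Matrix (Fin 2) (Fin 2) ℂ) (hU : U ∈ Matrix.unitaryGroup (Fin 2) ℂ)
    (i : Fin 2) : ‖U i 0‖ ^ 2 + ‖U i 1‖ ^ 2 = 1 := by
  have h := Matrix.mem_unitaryGroup_iff.mp hU
  have h00 := congrFun (congrFun h i) i
  simp [Matrix.mul_apply, Fin.sum_univ_two, Matrix.one_apply, Matrix.star_apply,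
    Complex.mul_conj] at h00
  have h' : Complex.normSq (U i 0) + Complex.normSq (U i 1) = 1 := by exact_mod_cast h00
  simp only [Complex.sq_norm]
  linarith

private lemma ucol (U : Matrix (Fin 2) (Fin 2) ℂ) (hU : U ∈ Matrix.unitaryGroup (Fin 2) ℂ)
    (j : Fin 2) : ‖U 0 j‖ ^ 2 + ‖U 1 j‖ ^ 2 = 1 := by
  have h := Matrix.mem_unitaryGroup_iff'.mp hU
  have h00 := congrFun (congrFun h j) j
  simp only [Matrix.mul_apply, Fin.sum_univ_two, Matrix.one_apply, Matrix.star_apply,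
    if_pos rfl, if_true, Complex.star_def] at h00
  rw [← Complex.normSq_eq_conj_mul_self, ← Complex.normSq_eq_conj_mul_self] at h00
  have h' : Complex.normSq (U 0 j) + Complex.normSq (U 1 j) = 1 := by exact_mod_cast h00
  simp only [Complex.sq_norm]
  linarith

private lemma sigmaX_unitary :
    (!![0, 1; 1, 0] : Matrix (Fin 2) (Fin 2) ℂ) ∈ Matrix.unitaryGroup (Fin 2) ℂ := by
  rw [Matrix.mem_unitaryGroup_iff]
  ext i j
  fin_cases i <;> fin_cases j <;>
    simp [Matrix.mul_apply, Fin.sum_univ_two, Matrix.one_apply, Matrix.star_apply]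

/-- For |ψ⟩ = √r|00⟩+√(1−r)|11⟩ and P⊥ = 𝟙−|ψ⟩⟨ψ|, the maximum over local
unitaries U_A = U⊗𝟙, V_B = 𝟙⊗V of |⟨ψ|U_A† P⊥ V_B|ψ⟩| equals 2√(r(1−r)). -/
theorem stmt_5 (r : ℝ) (hr0 : 0 ≤ r) (hr1 : r ≤ 1)
    (ψ : Fin 2 × Fin 2 → ℂ)
    (hψ : ψ = fun p => if p = (0, 0) then (Real.sqrt r : ℂ)
                       else if p = (1, 1) then (Real.sqrt (1 - r) : ℂ) else 0)
    (P : Matrix (Fin 2 × Fin 2) (Fin 2 × Fin 2) ℂ)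
    (hP : P = 1 - Matrix.vecMulVec ψ (star ψ)) :
    IsGreatest { x : ℝ | ∃ U ∈ Matrix.unitaryGroup (Fin 2) ℂ,
        ∃ V ∈ Matrix.unitaryGroup (Fin 2) ℂ,
        x = ‖star ψ ⬝ᵥ
          (((U ⊗ₖ (1 : Matrix (Fin 2) (Fin 2) ℂ))ᴴ * P *
            ((1 : Matrix (Fin 2) (Fin 2) ℂ) ⊗ₖ V)) *ᵥ ψ)‖ }
      (2 * Real.sqrt (r * (1 - r))) := by
  subst hP hψ
  set a := Real.sqrt r with ha_def
  set b := Real.sqrt (1 - r) with hb_def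
  have ha : 0 ≤ a := Real.sqrt_nonneg _
  have hb : 0 ≤ b := Real.sqrt_nonneg _
  have ha2 : a^2 = r := Real.sq_sqrt hr0
  have hb2 : b^2 = 1 - r := Real.sq_sqrt (by linarith)
  have habR : b^2 = 1 - a^2 := by rw [ha2, hb2]
  have habC : (b:ℂ)^2 = 1 - (a:ℂ)^2 := by exact_mod_cast congrArg (fun x : ℝ => (x:ℂ)) habR
  have hprod : a * b = Real.sqrt (r * (1 - r)) := (Real.sqrt_mul hr0 (1 - r)).symm
  have habsa : ‖(a:ℂ)‖ = a := by rw [Complex.norm_real, Real.norm_eq_abs, abs_of_nonneg ha]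
  have habsb : ‖(b:ℂ)‖ = b := by rw [Complex.norm_real, Real.norm_eq_abs, abs_of_nonneg hb]
  constructor
  · -- membership: U = V = σ_x
    refine ⟨!![0, 1; 1, 0], sigmaX_unitary, !![0, 1; 1, 0], sigmaX_unitary, ?_⟩
    rw [key_val a b habC]
    simp
    rw [abs_of_nonneg ha, abs_of_nonneg hb, show ((1:ℂ)+1) = 2 from by norm_num,
      Complex.norm_two, ← hprod]
    ring
  · -- upper bound
    rintro x ⟨U, hU, V, hV, rfl⟩
    rw [key_val a b habC]
    have hA : ‖(a:ℂ)^2 * (b:ℂ)^2 *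
        ((starRingEnd ℂ) (U 0 0) - (starRingEnd ℂ) (U 1 1)) * (V 0 0 - V 1 1)‖
        ≤ a^2*b^2*((‖U 0 0‖ + ‖U 1 1‖) *
            (‖V 0 0‖ + ‖V 1 1‖)) := by
      rw [norm_mul, norm_mul, norm_mul]
      have ea : ‖(a:ℂ)^2‖ = a^2 := by rw [norm_pow, habsa]
      have eb : ‖(b:ℂ)^2‖ = b^2 := by rw [norm_pow, habsb]
      rw [ea, eb]
      have hs : ‖(starRingEnd ℂ) (U 0 0) - (starRingEnd ℂ) (U 1 1)‖
          ≤ ‖U 0 0‖ + ‖U 1 1‖ := by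
        refine le_trans (norm_sub_le _ _) ?_
        simp [Complex.norm_conj]
      have ht : ‖V 0 0 - V 1 1‖ ≤ ‖V 0 0‖ + ‖V 1 1‖ :=
        norm_sub_le _ _
      calc a^2 * b^2 * ‖(starRingEnd ℂ) (U 0 0) - (starRingEnd ℂ) (U 1 1)‖
            * ‖V 0 0 - V 1 1‖
          = a^2*b^2 * (‖(starRingEnd ℂ) (U 0 0) - (starRingEnd ℂ) (U 1 1)‖
            * ‖V 0 0 - V 1 1‖) := by ring
        _ ≤ a^2*b^2*((‖U 0 0‖ + ‖U 1 1‖) *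
            (‖V 0 0‖ + ‖V 1 1‖)) := by
            refine mul_le_mul_of_nonneg_left ?_ (by positivity)
            exact mul_le_mul hs ht (norm_nonneg _) (by positivity)
    have hB : ‖(a:ℂ)*(b:ℂ) *
        ((starRingEnd ℂ) (U 1 0) * V 0 1 + (starRingEnd ℂ) (U 0 1) * V 1 0)‖
        ≤ a*b*(‖U 1 0‖ * ‖V 0 1‖
            + ‖U 0 1‖ * ‖V 1 0‖) := by
      rw [norm_mul, norm_mul, habsa, habsb]
      refine mul_le_mul_of_nonneg_left ?_ (by positivity)
      refine le_trans (norm_add_le _ _) ?_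
      rw [norm_mul, norm_mul]
      simp [Complex.norm_conj]
    refine le_trans (le_trans (norm_add_le _ _) (add_le_add hA hB)) ?_
    rw [← hprod]
    have hrow0U := urow U hU 0
    have hrow1U := urow U hU 1
    have hcol0U := ucol U hU 0
    have hrow0V := urow V hV 0
    have hrow1V := urow V hV 1
    have hcol0V := ucol V hV 0
    exact real_bound a b (‖U 0 0‖) (‖U 1 1‖)
      (‖U 0 1‖) (‖U 1 0‖)
      (‖V 0 0‖) (‖V 1 1‖)
      (‖V 0 1‖) (‖V 1 0‖)
      ha hb (norm_nonneg _) (norm_nonneg _) (norm_nonneg _)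
      (norm_nonneg _) (norm_nonneg _) (norm_nonneg _)
      (norm_nonneg _) (norm_nonneg _)
      (by rw [ha2, hb2]; ring) hrow0U hcol0U (by linarith [hrow1U])
      hrow0V hcol0V (by linarith [hrow1V])
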